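/- Let (a_n)_{n≥0} be a sequence of nonnegative real numbers, let k be a positive integer, α ∈ ℝ and β > 1, and suppose there is a sequence (r_n) with r_n → 0 such that a_n ≤ α + (2/(n−k+1))·Σ_{j=0}^{n−k} (j/n)^β·a_j + r_n for all n ≥ k. Then sup_{n≥0} a_n < ∞. -/

import Mathlib

open Filter Finset
open scoped Topology

/-- Telescoping + Bernoulli: `∑_{j<M} j^β ≤ M^(β+1)/(β+1)` for `β ≥ 1`. -/
lemma sum_rpow_le_aux (β : ℝ) (hβ : 1 ≤ β) (M : ℕ) :
    ∑ j ∈ Finset.range M, (j : ℝ) ^ β ≤ (M : ℝ) ^ (β + 1) / (β + 1) := by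
  have hβ1 : (0:ℝ) < β + 1 := by linarith
  induction M with
  | zero => simp [Real.zero_rpow (by linarith : (0:ℝ) < β + 1).ne']
  | succ M ih =>
      rw [Finset.sum_range_succ]
      have key : (M : ℝ) ^ (β + 1) + (β + 1) * (M : ℝ) ^ β ≤ ((M : ℝ) + 1) ^ (β + 1) := by
        rcases Nat.eq_zero_or_pos M with hM | hM
        · subst hM
          simp [Real.zero_rpow (by linarith : (0:ℝ) < β + 1).ne',
            Real.zero_rpow (by linarith : (0:ℝ) < β).ne']
        · have hM0 : (0:ℝ) < (M : ℝ) := by exact_mod_cast hM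
          have hbern : 1 + (β + 1) * (1 / (M:ℝ)) ≤ (1 + 1 / (M:ℝ)) ^ (β + 1) :=
            one_add_mul_self_le_rpow_one_add
              (le_trans (by norm_num) (one_div_nonneg.mpr hM0.le)) (by linarith)
          have h1 : ((M:ℝ) + 1) ^ (β + 1) = (M:ℝ) ^ (β + 1) * (1 + 1/(M:ℝ)) ^ (β + 1) := by
            rw [← Real.mul_rpow (le_of_lt hM0) (by positivity)]
            congr 1
            field_simp
          have h2 : (M:ℝ) ^ (β + 1) * (1 + (β + 1) * (1 / (M:ℝ)))
              = (M:ℝ) ^ (β + 1) + (β + 1) * (M:ℝ) ^ β := by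
            have hMpow : (M:ℝ) ^ (β + 1) = (M:ℝ) ^ β * (M:ℝ) := by
              rw [Real.rpow_add hM0, Real.rpow_one]
            rw [hMpow]; field_simp
          calc (M : ℝ) ^ (β + 1) + (β + 1) * (M : ℝ) ^ β
              = (M:ℝ) ^ (β + 1) * (1 + (β + 1) * (1 / (M:ℝ))) := h2.symm
            _ ≤ (M:ℝ) ^ (β + 1) * (1 + 1/(M:ℝ)) ^ (β + 1) := by
                apply mul_le_mul_of_nonneg_left hbern (by positivity)
            _ = ((M:ℝ) + 1) ^ (β + 1) := h1.symm
      push_cast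
      calc ∑ j ∈ Finset.range M, (j : ℝ) ^ β + (M:ℝ) ^ β
          ≤ (M : ℝ) ^ (β + 1) / (β + 1) + (M:ℝ) ^ β := by
            linarith [ih]
        _ ≤ ((M : ℝ) + 1) ^ (β + 1) / (β + 1) := by
            rw [div_add' _ _ _ (ne_of_gt hβ1), div_le_div_iff₀ hβ1 hβ1]
            nlinarith [key]

/-- **Lemma 2.1, second part.** If the nonnegative `a_n` satisfy
`a_n ≤ α + (2/(n-k+1)) Σ_{j=0}^{n-k} (j/n)^β a_j + o(1)` with `β > 1`, then `sup_n a_n < ∞`. -/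
theorem seq_bounded_of_recursive_bound
    (a : ℕ → ℝ) (ha : ∀ n, 0 ≤ a n) (k : ℕ) (hk : 0 < k) (α β : ℝ) (hβ : 1 < β)
    (r : ℕ → ℝ) (hr : Tendsto r atTop (𝓝 0))
    (h : ∀ n : ℕ, k ≤ n →
      a n ≤ α + (2 / ((n : ℝ) - (k : ℝ) + 1)) *
        ∑ j ∈ Finset.range (n - k + 1), ((j : ℝ) / (n : ℝ)) ^ β * a j + r n) :
    BddAbove (Set.range a) := by
  set c : ℝ := 2 / (β + 1) with hc_def
  have hβ1 : (0:ℝ) < β + 1 := by linarith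
  have hc0 : 0 < c := by positivity
  have hc1 : c < 1 := by
    rw [hc_def, div_lt_one hβ1]; linarith
  -- find N with r n ≤ 1 for n ≥ N
  obtain ⟨N, hN⟩ : ∃ N, ∀ n ≥ N, r n ≤ 1 :=
    Filter.eventually_atTop.mp (hr.eventually (eventually_le_nhds zero_lt_one))
  set N₀ := max N k with hN₀
  set C0 : ℝ := ∑ j ∈ Finset.range N₀, a j with hC0
  set B : ℝ := max C0 ((|α| + 1) / (1 - c)) with hB
  have h1c : (0:ℝ) < 1 - c := by linarith
  have hB0 : 0 ≤ B := le_trans (div_nonneg (by positivity) h1c.le) (le_max_right _ _)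
  have hBα : |α| + 1 ≤ (1 - c) * B := by
    have : (|α| + 1) / (1 - c) ≤ B := le_max_right _ _
    rw [div_le_iff₀ h1c] at this
    linarith [this]
  have key : ∀ n, a n ≤ B := by
    intro n
    induction n using Nat.strong_induction_on with
    | _ n ih =>
      rcases lt_or_ge n N₀ with hn | hn
      · refine le_trans ?_ (le_max_left C0 ((|α| + 1) / (1 - c)))
        exact Finset.single_le_sum (fun i _ => ha i) (Finset.mem_range.mpr hn)
      · have hkn : k ≤ n := le_trans (le_max_right N k) hn
        have hNn : N ≤ n := le_trans (le_max_left N k) hn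
        have hn1 : (1:ℕ) ≤ n := le_trans hk hkn
        have hnR : (0:ℝ) < (n:ℝ) := by exact_mod_cast hn1
        set M : ℕ := n - k + 1 with hM
        have hMn : M ≤ n := by omega
        have hMR : ((M:ℝ)) = (n:ℝ) - (k:ℝ) + 1 := by
          rw [hM]; push_cast [Nat.cast_sub hkn]; ring
        have hM0 : (0:ℝ) < (M:ℝ) := by positivity
        have hcoef : (0:ℝ) < 2 / ((n : ℝ) - (k : ℝ) + 1) := by
          rw [← hMR]; positivity
        -- bound the weighted sum
        have hsum1 : ∑ j ∈ Finset.range M, ((j : ℝ) / (n : ℝ)) ^ β * a j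
            ≤ (∑ j ∈ Finset.range M, ((j : ℝ) / (n : ℝ)) ^ β) * B := by
          rw [Finset.sum_mul]
          apply Finset.sum_le_sum
          intro j hj
          have hjM : j < M := Finset.mem_range.mp hj
          have hjn : j < n := by omega
          exact mul_le_mul_of_nonneg_left (ih j hjn) (by positivity)
        have hsum2 : ∑ j ∈ Finset.range M, ((j : ℝ) / (n : ℝ)) ^ β ≤ (M:ℝ) / (β + 1) := by
          have heq : ∑ j ∈ Finset.range M, ((j : ℝ) / (n : ℝ)) ^ β
              = (∑ j ∈ Finset.range M, (j : ℝ) ^ β) / (n:ℝ) ^ β := by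
            rw [Finset.sum_div]
            refine Finset.sum_congr rfl fun j _ => ?_
            rw [Real.div_rpow (Nat.cast_nonneg j) (le_of_lt hnR)]
          rw [heq, div_le_div_iff₀ (by positivity) hβ1]
          have h1 : ∑ j ∈ Finset.range M, (j : ℝ) ^ β ≤ (M : ℝ) ^ (β + 1) / (β + 1) :=
            sum_rpow_le_aux β (le_of_lt hβ) M
          have h2 : (M : ℝ) ^ (β + 1) ≤ (M:ℝ) * (n:ℝ) ^ β := by
            rw [Real.rpow_add hM0, Real.rpow_one, mul_comm]
            exact mul_le_mul_of_nonneg_left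
              (Real.rpow_le_rpow (le_of_lt hM0) (by exact_mod_cast hMn) (by linarith))
              (le_of_lt hM0)
          calc (∑ j ∈ Finset.range M, (j : ℝ) ^ β) * (β + 1)
              ≤ (M : ℝ) ^ (β + 1) / (β + 1) * (β + 1) := by
                exact mul_le_mul_of_nonneg_right h1 (le_of_lt hβ1)
            _ = (M : ℝ) ^ (β + 1) := by field_simp
            _ ≤ (M:ℝ) * (n:ℝ) ^ β := h2
        have hmain : (2 / ((n : ℝ) - (k : ℝ) + 1)) *
            ∑ j ∈ Finset.range M, ((j : ℝ) / (n : ℝ)) ^ β * a j ≤ c * B := by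
          calc (2 / ((n : ℝ) - (k : ℝ) + 1)) *
              ∑ j ∈ Finset.range M, ((j : ℝ) / (n : ℝ)) ^ β * a j
              ≤ (2 / ((n : ℝ) - (k : ℝ) + 1)) *
                ((∑ j ∈ Finset.range M, ((j : ℝ) / (n : ℝ)) ^ β) * B) :=
                mul_le_mul_of_nonneg_left hsum1 (le_of_lt hcoef)
            _ ≤ (2 / ((n : ℝ) - (k : ℝ) + 1)) * ((M:ℝ) / (β + 1) * B) := by
                apply mul_le_mul_of_nonneg_left _ (le_of_lt hcoef)
                exact mul_le_mul_of_nonneg_right hsum2 hB0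
            _ = c * B := by
                rw [← hMR, hc_def]; field_simp
        have := h n hkn
        have hrn : r n ≤ 1 := hN n hNn
        have hα : α ≤ |α| := le_abs_self α
        calc a n ≤ α + (2 / ((n : ℝ) - (k : ℝ) + 1)) *
              ∑ j ∈ Finset.range (n - k + 1), ((j : ℝ) / (n : ℝ)) ^ β * a j + r n := this
          _ ≤ |α| + c * B + 1 := by
              have : (2 / ((n : ℝ) - (k : ℝ) + 1)) *
                ∑ j ∈ Finset.range (n - k + 1), ((j : ℝ) / (n : ℝ)) ^ β * a j ≤ c * B := hmain
              linarith
          _ ≤ B := by nlinarith [hBα]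
  exact ⟨B, by rintro x ⟨n, rfl⟩; exact key n⟩
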